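/- Assume m0, m1, m2 are pairwise distinct and let d10 = ‖m1 − m0‖, d20 = ‖m2 − m0‖, d21 = ‖m2 − m1‖. Then the set P₂ = {(t₁, t₂) ∈ ℝ² : |t₁| ≤ d10, |t₂| ≤ d20, |t₂ − t₁| ≤ d21} is convex, compact, and has nonempty interior. If moreover m0, m1, m2 are not collinear, then P₂ equals the convex hull of the six points (d10, d20), (d20 − d21, d20), (−d10, d21 − d10), (−d10, −d20), (d21 − d20, −d20), (d10, d10 − d21), so that P₂ is a hexagon. -/

import Mathlib

set_option maxHeartbeats 1000000

lemma convP (d10 d20 d21 : ℝ) :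
    Convex ℝ {t : ℝ × ℝ | |t.1| ≤ d10 ∧ |t.2| ≤ d20 ∧ |t.2 - t.1| ≤ d21} := by
  intro p hp q hq α β hα hβ hαβ
  simp only [Set.mem_setOf_eq, abs_le] at *
  obtain ⟨⟨h1,h2⟩,⟨h3,h4⟩,⟨h5,h6⟩⟩ := hp
  obtain ⟨⟨g1,g2⟩,⟨g3,g4⟩,⟨g5,g6⟩⟩ := hq
  simp only [Prod.fst_add, Prod.snd_add, Prod.smul_fst, Prod.smul_snd, smul_eq_mul]
  refine ⟨⟨?_, ?_⟩, ⟨?_, ?_⟩, ?_, ?_⟩ <;> nlinarith [mul_le_mul_of_nonneg_left h2 hα]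

lemma hexagon (d10 d20 d21 : ℝ) (h1 : d10 < d20 + d21) (h2 : d20 < d10 + d21)
    (h3 : d21 < d10 + d20) :
    {t : ℝ × ℝ | |t.1| ≤ d10 ∧ |t.2| ≤ d20 ∧ |t.2 - t.1| ≤ d21} =
      convexHull ℝ ({(d10, d20), (d20 - d21, d20), (-d10, d21 - d10),
          (-d10, -d20), (d21 - d20, -d20), (d10, d10 - d21)} : Set (ℝ × ℝ)) := by
  obtain ⟨a, ha'⟩ : ∃ x : ℝ, x = (d10 + d21 - d20)/2 := ⟨_, rfl⟩
  obtain ⟨b, hb'⟩ : ∃ x : ℝ, x = (d20 + d21 - d10)/2 := ⟨_, rfl⟩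
  obtain ⟨c, hc'⟩ : ∃ x : ℝ, x = (d10 + d20 - d21)/2 := ⟨_, rfl⟩
  have ha : (0:ℝ) < a := by rw [ha']; linarith
  have hb : (0:ℝ) < b := by rw [hb']; linarith
  have hc : (0:ℝ) < c := by rw [hc']; linarith
  have eA : d10 = a + c := by rw [ha', hc']; ring
  have eB : d20 = b + c := by rw [hb', hc']; ring
  have eC : d21 = a + b := by rw [ha', hb']; ring
  apply Set.Subset.antisymm
  · rintro ⟨t1, t2⟩ ht
    simp only [Set.mem_setOf_eq, abs_le] at ht
    obtain ⟨⟨p1, p2⟩, ⟨p3, p4⟩, p5, p6⟩ := ht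
    -- choose z
    obtain ⟨zmin, hzmin⟩ : ∃ x, x = max (max (t1 - a) (t2 - b)) (-c) := ⟨_, rfl⟩
    obtain ⟨zmax, hzmax⟩ : ∃ x, x = min (min (t1 + a) (t2 + b)) c := ⟨_, rfl⟩
    obtain ⟨z0, hz0⟩ : ∃ x, x = (b*c*t1 + a*c*t2) / (a*b + b*c + a*c) := ⟨_, rfl⟩
    obtain ⟨z, hz⟩ : ∃ x, x = max zmin (min zmax z0) := ⟨_, rfl⟩
    have hS : (0:ℝ) < a*b + b*c + a*c := by positivity
    have habc : (0:ℝ) < a*b*c := by positivity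
    have hgz0 : b*c*t1 + a*c*t2 - (a*b + b*c + a*c) * z0 = 0 := by
      rw [hz0]; field_simp; ring
    have hmm : zmin ≤ zmax := by
      rw [hzmin, hzmax]
      refine max_le (max_le ?_ ?_) ?_ <;> refine le_min (le_min ?_ ?_) ?_ <;> linarith
    have hzlo : zmin ≤ z := by rw [hz]; exact le_max_left _ _
    have hzhi : z ≤ zmax := by rw [hz]; exact max_le hmm (min_le_left _ _)
    have hz1 : t1 - a ≤ z := by
      refine le_trans ?_ hzlo; rw [hzmin]
      exact le_trans (le_max_left _ _) (le_max_left _ _)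
    have hz2 : t2 - b ≤ z := by
      refine le_trans ?_ hzlo; rw [hzmin]
      exact le_trans (le_max_right _ _) (le_max_left _ _)
    have hz3 : -c ≤ z := by
      refine le_trans ?_ hzlo; rw [hzmin]; exact le_max_right _ _
    have hz4 : z ≤ t1 + a := by
      refine le_trans hzhi ?_; rw [hzmax]
      exact le_trans (min_le_left _ _) (min_le_left _ _)
    have hz5 : z ≤ t2 + b := by
      refine le_trans hzhi ?_; rw [hzmax]
      exact le_trans (min_le_left _ _) (min_le_right _ _)
    have hz6 : z ≤ c := by
      refine le_trans hzhi ?_; rw [hzmax]; exact min_le_right _ _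
    -- key bound
    have hgup : b*c*(t1 - z) + a*c*(t2 - z) - a*b*z ≤ a*b*c := by
      rcases le_total z0 zmax with hcase | hcase
      · have hzz0 : z0 ≤ z := by
          rw [hz]; exact le_max_of_le_right (le_min hcase le_rfl)
        nlinarith [mul_le_mul_of_nonneg_left hzz0 hS.le]
      · have hzge : zmax ≤ z := by
          rw [hz]; exact le_max_of_le_right (le_min le_rfl hcase)
        rw [hzmax] at hzge
        have hone : t1 + a ≤ z ∨ t2 + b ≤ z ∨ c ≤ z := by
          rcases min_cases (min (t1 + a) (t2 + b)) c with ⟨he, _⟩ | ⟨he, _⟩ <;>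
            rw [he] at hzge
          · rcases min_cases (t1 + a) (t2 + b) with ⟨he2, _⟩ | ⟨he2, _⟩ <;>
              rw [he2] at hzge
            · exact Or.inl hzge
            · exact Or.inr (Or.inl hzge)
          · exact Or.inr (Or.inr hzge)
        rcases hone with h | h | h
        · have e1 : b*c*(t1 - z) ≤ b*c*(-a) :=
            mul_le_mul_of_nonneg_left (by linarith) (by positivity)
          have e2 : a*c*(t2 - z) ≤ a*c*b :=
            mul_le_mul_of_nonneg_left (by linarith) (by positivity)
          have e3 : a*b*(-z) ≤ a*b*c :=
            mul_le_mul_of_nonneg_left (by linarith) (by positivity)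
          nlinarith [e1, e2, e3]
        · have e1 : b*c*(t1 - z) ≤ b*c*a :=
            mul_le_mul_of_nonneg_left (by linarith) (by positivity)
          have e2 : a*c*(t2 - z) ≤ a*c*(-b) :=
            mul_le_mul_of_nonneg_left (by linarith) (by positivity)
          have e3 : a*b*(-z) ≤ a*b*c :=
            mul_le_mul_of_nonneg_left (by linarith) (by positivity)
          nlinarith [e1, e2, e3]
        · have e1 : b*c*(t1 - z) ≤ b*c*a :=
            mul_le_mul_of_nonneg_left (by linarith) (by positivity)
          have e2 : a*c*(t2 - z) ≤ a*c*b :=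
            mul_le_mul_of_nonneg_left (by linarith) (by positivity)
          have e3 : a*b*(-z) ≤ a*b*(-c) :=
            mul_le_mul_of_nonneg_left (by linarith) (by positivity)
          nlinarith [e1, e2, e3]
    have hglo : -(a*b*c) ≤ b*c*(t1 - z) + a*c*(t2 - z) - a*b*z := by
      rcases le_total zmin z0 with hcase | hcase
      · have hzz0 : z ≤ z0 := by
          rw [hz]; exact max_le hcase (min_le_right _ _)
        nlinarith [mul_le_mul_of_nonneg_left hzz0 hS.le]
      · have hzle : z ≤ zmin := by
          rw [hz]; exact max_le le_rfl (le_trans (min_le_right _ _) hcase)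
        rw [hzmin] at hzle
        have hone : z ≤ t1 - a ∨ z ≤ t2 - b ∨ z ≤ -c := by
          rcases max_cases (max (t1 - a) (t2 - b)) (-c) with ⟨he, _⟩ | ⟨he, _⟩ <;>
            rw [he] at hzle
          · rcases max_cases (t1 - a) (t2 - b) with ⟨he2, _⟩ | ⟨he2, _⟩ <;>
              rw [he2] at hzle
            · exact Or.inl hzle
            · exact Or.inr (Or.inl hzle)
          · exact Or.inr (Or.inr hzle)
        rcases hone with h | h | h
        · have e1 : b*c*a ≤ b*c*(t1 - z) :=
            mul_le_mul_of_nonneg_left (by linarith) (by positivity)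
          have e2 : a*c*(-b) ≤ a*c*(t2 - z) :=
            mul_le_mul_of_nonneg_left (by linarith) (by positivity)
          have e3 : a*b*(-c) ≤ a*b*(-z) :=
            mul_le_mul_of_nonneg_left (by linarith) (by positivity)
          nlinarith [e1, e2, e3]
        · have e1 : b*c*(-a) ≤ b*c*(t1 - z) :=
            mul_le_mul_of_nonneg_left (by linarith) (by positivity)
          have e2 : a*c*b ≤ a*c*(t2 - z) :=
            mul_le_mul_of_nonneg_left (by linarith) (by positivity)
          have e3 : a*b*(-c) ≤ a*b*(-z) :=
            mul_le_mul_of_nonneg_left (by linarith) (by positivity)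
          nlinarith [e1, e2, e3]
        · have e1 : b*c*(-a) ≤ b*c*(t1 - z) :=
            mul_le_mul_of_nonneg_left (by linarith) (by positivity)
          have e2 : a*c*(-b) ≤ a*c*(t2 - z) :=
            mul_le_mul_of_nonneg_left (by linarith) (by positivity)
          have e3 : a*b*c ≤ a*b*(-z) :=
            mul_le_mul_of_nonneg_left (by linarith) (by positivity)
          nlinarith [e1, e2, e3]
    -- normalized coordinates
    obtain ⟨X, hX⟩ : ∃ x, x = (t1 - z)/a := ⟨_, rfl⟩
    obtain ⟨Y, hY⟩ : ∃ x, x = (t2 - z)/b := ⟨_, rfl⟩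
    obtain ⟨Z, hZ⟩ : ∃ x, x = z/c := ⟨_, rfl⟩
    have hX1 : -1 ≤ X := by rw [hX, le_div_iff₀ ha]; linarith
    have hX2 : X ≤ 1 := by rw [hX, div_le_one ha]; linarith
    have hY1 : -1 ≤ Y := by rw [hY, le_div_iff₀ hb]; linarith
    have hY2 : Y ≤ 1 := by rw [hY, div_le_one hb]; linarith
    have hZ1 : -1 ≤ Z := by rw [hZ, le_div_iff₀ hc]; linarith
    have hZ2 : Z ≤ 1 := by rw [hZ, div_le_one hc]; linarith
    have hWeq : X + Y - Z = (b*c*(t1 - z) + a*c*(t2 - z) - a*b*z)/(a*b*c) := by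
      rw [hX, hY, hZ]; field_simp
    have hW1 : -1 ≤ X + Y - Z := by rw [hWeq, le_div_iff₀ habc]; linarith
    have hW2 : X + Y - Z ≤ 1 := by rw [hWeq, div_le_one habc]; linarith
    obtain ⟨u, hu⟩ : ∃ x, x = (X + Y)/2 := ⟨_, rfl⟩
    obtain ⟨v, hv⟩ : ∃ x, x = (Z - X)/2 := ⟨_, rfl⟩
    obtain ⟨w, hw⟩ : ∃ x, x = (Y - Z)/2 := ⟨_, rfl⟩
    have key : |u| + |v| + |w| ≤ 1 := by
      rcases abs_cases u with ⟨e, _⟩ | ⟨e, _⟩ <;>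
      rcases abs_cases v with ⟨f, _⟩ | ⟨f, _⟩ <;>
      rcases abs_cases w with ⟨g, _⟩ | ⟨g, _⟩ <;>
      rw [e, f, g, hu, hv, hw] <;> linarith
    obtain ⟨r, hr⟩ : ∃ x, x = 1 - (|u| + |v| + |w|) := ⟨_, rfl⟩
    have hrpos : 0 ≤ r := by rw [hr]; linarith
    obtain ⟨l1, hl1⟩ : ∃ x, x = max u 0 + r/2 := ⟨_, rfl⟩
    obtain ⟨l2, hl2⟩ : ∃ x, x = max v 0 := ⟨_, rfl⟩
    obtain ⟨l3, hl3⟩ : ∃ x, x = max w 0 := ⟨_, rfl⟩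
    obtain ⟨l4, hl4⟩ : ∃ x, x = max (-u) 0 + r/2 := ⟨_, rfl⟩
    obtain ⟨l5, hl5⟩ : ∃ x, x = max (-v) 0 := ⟨_, rfl⟩
    obtain ⟨l6, hl6⟩ : ∃ x, x = max (-w) 0 := ⟨_, rfl⟩
    have f4 : l4 = l1 - u := by
      rw [hl4, hl1]
      have := max_zero_sub_max_neg_zero_eq_self u
      linarith
    have f5 : l5 = l2 - v := by
      rw [hl5, hl2]
      have := max_zero_sub_max_neg_zero_eq_self v
      linarith
    have f6 : l6 = l3 - w := by
      rw [hl6, hl3]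
      have := max_zero_sub_max_neg_zero_eq_self w
      linarith
    have esum : l1 + l2 + l3 + l4 + l5 + l6 = 1 := by
      rw [hl1, hl2, hl3, hl4, hl5, hl6, hr]
      have eu := max_zero_add_max_neg_zero_eq_abs_self u
      have ev := max_zero_add_max_neg_zero_eq_abs_self v
      have ew := max_zero_add_max_neg_zero_eq_abs_self w
      linarith
    have hl1p : 0 ≤ l1 := by rw [hl1]; linarith [le_max_right u (0:ℝ)]
    have hl2p : 0 ≤ l2 := by rw [hl2]; exact le_max_right _ _
    have hl3p : 0 ≤ l3 := by rw [hl3]; exact le_max_right _ _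
    have hl4p : 0 ≤ l4 := by rw [hl4]; linarith [le_max_right (-u) (0:ℝ)]
    have hl5p : 0 ≤ l5 := by rw [hl5]; exact le_max_right _ _
    have hl6p : 0 ≤ l6 := by rw [hl6]; exact le_max_right _ _
    have hw0 : ∀ i ∈ (Finset.univ : Finset (Fin 6)), 0 ≤ ![l1, l2, l3, l4, l5, l6] i := by
      intro i _
      fin_cases i
      · exact hl1p
      · exact hl2p
      · exact hl3p
      · exact hl4p
      · exact hl5p
      · exact hl6p
    have hsum6 : ∑ i : Fin 6, ![l1, l2, l3, l4, l5, l6] i = l1 + l2 + l3 + l4 + l5 + l6 := by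
      rw [Fin.sum_univ_six]; rfl
    have hws : (0:ℝ) < ∑ i : Fin 6, ![l1, l2, l3, l4, l5, l6] i := by
      rw [hsum6]; linarith
    have hcm : Finset.centerMass (Finset.univ : Finset (Fin 6))
        ![l1, l2, l3, l4, l5, l6]
        ![((d10:ℝ), (d20:ℝ)), (d20 - d21, d20), (-d10, d21 - d10),
          (-d10, -d20), (d21 - d20, -d20), (d10, d10 - d21)] = (t1, t2) := by
      rw [Finset.centerMass_eq_of_sum_1 _ _ (by rw [hsum6, esum])]
      rw [Fin.sum_univ_six]
      show l1 • ((d10:ℝ), (d20:ℝ)) + l2 • ((d20 - d21 : ℝ), (d20:ℝ)) +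
          l3 • ((-d10 : ℝ), (d21 - d10 : ℝ)) + l4 • ((-d10 : ℝ), (-d20 : ℝ)) +
          l5 • ((d21 - d20 : ℝ), (-d20 : ℝ)) + l6 • ((d10:ℝ), (d10 - d21 : ℝ)) = (t1, t2)
      simp only [Prod.smul_mk, smul_eq_mul, Prod.mk_add_mk, Prod.mk.injEq]
      refine ⟨?_, ?_⟩
      · rw [f4, f5, f6, eA, eB, eC, hu, hv, hw, hX, hY, hZ]
        field_simp
        ring
      · rw [f4, f5, f6, eA, eB, eC, hu, hv, hw, hX, hY, hZ]
        field_simp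
        ring
    rw [← hcm]
    refine Finset.centerMass_mem_convexHull _ hw0 hws ?_
    intro i _
    fin_cases i
    · exact Set.mem_insert _ _
    · exact Set.mem_insert_of_mem _ (Set.mem_insert _ _)
    · exact Set.mem_insert_of_mem _ (Set.mem_insert_of_mem _ (Set.mem_insert _ _))
    · exact Set.mem_insert_of_mem _ (Set.mem_insert_of_mem _ (Set.mem_insert_of_mem _
        (Set.mem_insert _ _)))
    · exact Set.mem_insert_of_mem _ (Set.mem_insert_of_mem _ (Set.mem_insert_of_mem _
        (Set.mem_insert_of_mem _ (Set.mem_insert _ _))))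
    · exact Set.mem_insert_of_mem _ (Set.mem_insert_of_mem _ (Set.mem_insert_of_mem _
        (Set.mem_insert_of_mem _ (Set.mem_insert_of_mem _ rfl))))
  · apply convexHull_min _ (convP d10 d20 d21)
    intro p hp
    have hd10 : 0 < d10 := by linarith
    have hd20 : 0 < d20 := by linarith
    have hd21 : 0 < d21 := by linarith
    simp only [Set.mem_insert_iff, Set.mem_singleton_iff] at hp
    rcases hp with h | h | h | h | h | h <;> subst h <;>
      simp only [Set.mem_setOf_eq, abs_le] <;>
      refine ⟨⟨?_, ?_⟩, ⟨?_, ?_⟩, ?_, ?_⟩ <;> norm_num <;> linarith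

theorem stmt6 (m0 m1 m2 : EuclideanSpace ℝ (Fin 2))
    (h01 : m0 ≠ m1) (h02 : m0 ≠ m2) (h12 : m1 ≠ m2)
    (d10 d20 d21 : ℝ)
    (hd10 : d10 = ‖m1 - m0‖) (hd20 : d20 = ‖m2 - m0‖) (hd21 : d21 = ‖m2 - m1‖)
    (P2 : Set (ℝ × ℝ))
    (hP2 : P2 = {t : ℝ × ℝ | |t.1| ≤ d10 ∧ |t.2| ≤ d20 ∧ |t.2 - t.1| ≤ d21}) :
    Convex ℝ P2 ∧ IsCompact P2 ∧ (interior P2).Nonempty ∧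
    (¬ Collinear ℝ ({m0, m1, m2} : Set (EuclideanSpace ℝ (Fin 2))) →
      P2 = convexHull ℝ
        ({(d10, d20), (d20 - d21, d20), (-d10, d21 - d10),
          (-d10, -d20), (d21 - d20, -d20), (d10, d10 - d21)} : Set (ℝ × ℝ))) := by
  have e10 : d10 = dist m1 m0 := by rw [hd10, dist_eq_norm]
  have e20 : d20 = dist m2 m0 := by rw [hd20, dist_eq_norm]
  have e21 : d21 = dist m2 m1 := by rw [hd21, dist_eq_norm]
  have hp10 : 0 < d10 := by
    rw [e10]; exact dist_pos.mpr (Ne.symm h01)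
  have hp20 : 0 < d20 := by
    rw [e20]; exact dist_pos.mpr (Ne.symm h02)
  have hp21 : 0 < d21 := by
    rw [e21]; exact dist_pos.mpr (Ne.symm h12)
  refine ⟨?_, ?_, ?_, ?_⟩
  · rw [hP2]; exact convP d10 d20 d21
  · have hclosed : IsClosed P2 := by
      rw [hP2]
      exact IsClosed.inter (isClosed_le (continuous_fst.abs) continuous_const)
        (IsClosed.inter (isClosed_le (continuous_snd.abs) continuous_const)
          (isClosed_le ((continuous_snd.sub continuous_fst).abs) continuous_const))
    refine IsCompact.of_isClosed_subset (isCompact_Icc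
      (a := ((-d10 : ℝ), (-d20 : ℝ))) (b := ((d10 : ℝ), (d20 : ℝ)))) hclosed ?_
    rw [hP2]
    rintro ⟨t1, t2⟩ ht
    simp only [Set.mem_setOf_eq, abs_le] at ht
    obtain ⟨⟨q1, q2⟩, ⟨q3, q4⟩, _, _⟩ := ht
    simp only [Set.mem_Icc, Prod.le_def]
    exact ⟨⟨q1, q3⟩, q2, q4⟩
  · refine ⟨(0, 0), ?_⟩
    rw [mem_interior_iff_mem_nhds]
    have hε : (0:ℝ) < min d10 (min d20 (d21/2)) := by
      refine lt_min hp10 (lt_min hp20 (by linarith))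
    refine Filter.mem_of_superset (Metric.ball_mem_nhds _ hε) ?_
    rintro ⟨t1, t2⟩ ht
    rw [Metric.mem_ball] at ht
    rw [Prod.dist_eq] at ht
    simp only [dist_zero_right, Real.norm_eq_abs] at ht
    have h1 : |t1| < min d10 (min d20 (d21/2)) := lt_of_le_of_lt (le_max_left _ _) ht
    have h2 : |t2| < min d10 (min d20 (d21/2)) := lt_of_le_of_lt (le_max_right _ _) ht
    have b1 := min_le_left d10 (min d20 (d21/2))
    have b2 := le_trans (min_le_right d10 (min d20 (d21/2))) (min_le_left d20 (d21/2))
    have b3 := le_trans (min_le_right d10 (min d20 (d21/2))) (min_le_right d20 (d21/2))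
    rw [hP2]
    simp only [Set.mem_setOf_eq]
    have habs : |t2 - t1| ≤ |t2| + |t1| := abs_sub _ _
    refine ⟨by linarith, by linarith, by linarith⟩
  · intro hncol
    have hc1 : ¬ Collinear ℝ ({m1, m2, m0} : Set (EuclideanSpace ℝ (Fin 2))) := by
      intro h; apply hncol
      have : ({m1, m2, m0} : Set (EuclideanSpace ℝ (Fin 2))) = {m0, m1, m2} := by
        ext x; simp; tauto
      rwa [this] at h
    have hc2 : ¬ Collinear ℝ ({m2, m1, m0} : Set (EuclideanSpace ℝ (Fin 2))) := by
      intro h; apply hncol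
      have : ({m2, m1, m0} : Set (EuclideanSpace ℝ (Fin 2))) = {m0, m1, m2} := by
        ext x; simp; tauto
      rwa [this] at h
    have hc3 : ¬ Collinear ℝ ({m2, m0, m1} : Set (EuclideanSpace ℝ (Fin 2))) := by
      intro h; apply hncol
      have : ({m2, m0, m1} : Set (EuclideanSpace ℝ (Fin 2))) = {m0, m1, m2} := by
        ext x; simp; tauto
      rwa [this] at h
    have c1 : dist m1 m2 = d21 := by rw [e21, dist_comm]
    have c2 : dist m2 m0 = d20 := e20.symm
    have c3 : dist m1 m0 = d10 := e10.symm
    have c4 : dist m0 m1 = d10 := by rw [e10, dist_comm]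
    have c5 : dist m2 m1 = d21 := e21.symm
    have s1 : d10 < d20 + d21 := by
      by_contra hlt
      push_neg at hlt
      apply hc1
      refine Wbtw.collinear (dist_add_dist_eq_iff.mp ?_)
      rw [c1, c2, c3]
      linarith [dist_triangle m1 m2 m0, c1, c2, c3]
    have s2 : d20 < d10 + d21 := by
      by_contra hlt
      push_neg at hlt
      apply hc2
      refine Wbtw.collinear (dist_add_dist_eq_iff.mp ?_)
      rw [c5, c3, c2]
      linarith [dist_triangle m2 m1 m0, c5, c3, c2]
    have s3 : d21 < d10 + d20 := by
      by_contra hlt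
      push_neg at hlt
      apply hc3
      refine Wbtw.collinear (dist_add_dist_eq_iff.mp ?_)
      rw [c2, c4, c5]
      linarith [dist_triangle m2 m0 m1, c2, c4, c5]
    rw [hP2]
    exact hexagon d10 d20 d21 s1 s2 s3
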